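/- Let X be a nonzero real vector space and S a skeleton in X with head e. Let V be the linear span of S and V⁺ the cone generated by S (nonnegative combinations of elements of S). Then (V, V⁺, e) is an order unit space (V⁺ is a proper, Archimedean, generating cone with order unit e), and S \ {0, e} = {v ∈ V⁺ : ‖v‖ = ‖e − v‖ = 1}, where ‖·‖ is the order unit norm. -/

import Mathlib

open Set

/-- `C` is the positive cone of an order unit space structure on `V` with order unit `e`:
a proper, Archimedean cone for which `e` is an order unit. -/
structure IsOrderUnitSpace {V : Type*} [AddCommGroup V] [Module ℝ V]
    (C : Set V) (e : V) : Prop where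
  zero_mem : (0 : V) ∈ C
  add_mem : ∀ u ∈ C, ∀ v ∈ C, u + v ∈ C
  smul_mem : ∀ r : ℝ, 0 ≤ r → ∀ v ∈ C, r • v ∈ C
  proper : ∀ v ∈ C, -v ∈ C → v = 0
  arch : ∀ v : V, (∀ ε : ℝ, 0 < ε → ε • e + v ∈ C) → v ∈ C
  unit : ∀ v : V, ∃ a : ℝ, 0 < a ∧ a • e - v ∈ C ∧ a • e + v ∈ C

/-- The order unit norm `‖v‖ = inf {a > 0 : a • e ± v ∈ C}`. -/
noncomputable def ouNorm {V : Type*} [AddCommGroup V] [Module ℝ V]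
    (C : Set V) (e : V) (v : V) : ℝ :=
  sInf {a : ℝ | 0 < a ∧ a • e - v ∈ C ∧ a • e + v ∈ C}

/-- A state: a positive linear functional sending `e` to `1`. -/
def IsState {V : Type*} [AddCommGroup V] [Module ℝ V]
    (C : Set V) (e : V) (f : V →ₗ[ℝ] ℝ) : Prop :=
  (∀ v ∈ C, 0 ≤ f v) ∧ f e = 1

/-- `∞`-orthogonality with respect to the order unit norm. -/
def PerpInf {V : Type*} [AddCommGroup V] [Module ℝ V]
    (C : Set V) (e : V) (x y : V) : Prop :=
  ∀ k : ℝ, ouNorm C e (x + k • y) = max (ouNorm C e x) (ouNorm C e (k • y))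

/-- A peripheral element of an order unit space. -/
def Peripheral {V : Type*} [AddCommGroup V] [Module ℝ V]
    (C : Set V) (e : V) (u : V) : Prop :=
  u ∈ C ∧ e - u ∈ C ∧ ouNorm C e u = 1 ∧ ouNorm C e (e - u) = 1


/-- A *skeleton* with head `e` in a real vector space `X`. -/
structure IsSkeleton {X : Type*} [AddCommGroup X] [Module ℝ X] (S : Set X) (e : X) : Prop where
  head_ne : e ≠ 0
  zero_mem : (0 : X) ∈ S
  head_mem : e ∈ S
  compl_mem : ∀ u ∈ S, e - u ∈ S
  comb : ∀ u ∈ S, ∀ v ∈ S, ∀ l : ℝ, 0 ≤ l → l ≤ 1 →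
    ∃ w ∈ S \ {0, e}, ∃ a b : ℝ, 0 ≤ a ∧ 0 ≤ b ∧
      l • u + (1 - l) • v = a • e + b • w
  head_sum : ∀ n : ℕ, 2 ≤ n → ∀ u : Fin n → X, ∀ a : Fin n → ℝ,
    (∀ i, u i ∈ S \ {0, e}) → (∀ i, 0 < a i) →
    e = ∑ i, a i • u i → ∀ j, 1 ≤ ∑ i ∈ Finset.univ.erase j, a i

/-- The cone of all nonnegative combinations of elements of . -/
def coneOf {X : Type*} [AddCommGroup X] [Module ℝ X] (S : Set X) : Set X :=
  {v | ∃ (n : ℕ) (u : Fin n → X) (a : Fin n → ℝ),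
    (∀ i, u i ∈ S) ∧ (∀ i, 0 ≤ a i) ∧ v = ∑ i, a i • u i}


section Aux
variable {X : Type*} [AddCommGroup X] [Module ℝ X] {S : Set X} {e : X}

lemma coneOf_zero : (0 : X) ∈ coneOf S :=
  ⟨0, fun i => i.elim0, fun i => i.elim0, fun i => i.elim0, fun i => i.elim0, by simp⟩

lemma mem_coneOf {x : X} (hx : x ∈ S) : x ∈ coneOf S :=
  ⟨1, fun _ => x, fun _ => 1, fun _ => hx, fun _ => zero_le_one, by simp⟩

lemma coneOf_add {x y : X} (hx : x ∈ coneOf S) (hy : y ∈ coneOf S) : x + y ∈ coneOf S := by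
  obtain ⟨n, u, a, hu, ha, rfl⟩ := hx
  obtain ⟨m, v, b, hv, hb, rfl⟩ := hy
  refine ⟨n + m, Fin.addCases u v, Fin.addCases a b, ?_, ?_, ?_⟩
  · intro i; refine Fin.addCases ?_ ?_ i <;> intro j <;> simp [hu, hv]
  · intro i; refine Fin.addCases ?_ ?_ i <;> intro j <;> simp [ha, hb]
  · rw [Fin.sum_univ_add]; simp

lemma coneOf_smul {r : ℝ} (hr : 0 ≤ r) {x : X} (hx : x ∈ coneOf S) : r • x ∈ coneOf S := by
  obtain ⟨n, u, a, hu, ha, rfl⟩ := hx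
  refine ⟨n, u, fun i => r * a i, hu, fun i => mul_nonneg hr (ha i), ?_⟩
  rw [Finset.smul_sum]
  simp [smul_smul]

end Aux

section Aux2
variable {X : Type*} [AddCommGroup X] [Module ℝ X] {S : Set X} {e : X}

lemma S0_ne_zero {w : X} (hw : w ∈ S \ {0, e}) : w ≠ 0 := fun h0 => hw.2 (by simp [h0])

lemma S0_ne_head {w : X} (hw : w ∈ S \ {0, e}) : w ≠ e := fun h0 => hw.2 (by simp [h0])

lemma compl_S0 (h : IsSkeleton S e) {w : X} (hw : w ∈ S \ {0, e}) : e - w ∈ S \ {0, e} := by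
  refine ⟨h.compl_mem w hw.1, ?_⟩
  intro hm
  rcases hm with hm | hm
  · exact S0_ne_head hw (by rw [sub_eq_zero] at hm; exact hm.symm)
  · simp only [Set.mem_singleton_iff, sub_eq_self] at hm
    exact S0_ne_zero hw hm

lemma S0_nonempty (h : IsSkeleton S e) : ∃ w, w ∈ S \ {0, e} := by
  obtain ⟨w, hw, -⟩ := h.comb 0 h.zero_mem 0 h.zero_mem 0 le_rfl zero_le_one
  exact ⟨w, hw⟩

lemma two_rep (h : IsSkeleton S e) {u₁ u₂ : X} (h1 : u₁ ∈ S \ {0, e}) (h2 : u₂ ∈ S \ {0, e})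
    {p q : ℝ} (hp : 0 < p) (hq : 0 < q) (heq : e = p • u₁ + q • u₂) : 1 ≤ p ∧ 1 ≤ q := by
  have key := h.head_sum 2 le_rfl ![u₁, u₂] ![p, q]
    (by intro i; fin_cases i <;> first | exact h1 | exact h2)
    (by intro i; fin_cases i <;> first | exact hp | exact hq)
    (by simpa [Fin.sum_univ_two])
  constructor
  · have := key 1
    rwa [Finset.sum_erase_eq_sub (Finset.mem_univ _), Fin.sum_univ_two,
      Matrix.cons_val_zero, Matrix.cons_val_one, Matrix.cons_val_zero, add_sub_cancel_right] at this
  · have := key 0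
    rwa [Finset.sum_erase_eq_sub (Finset.mem_univ _), Fin.sum_univ_two,
      Matrix.cons_val_zero, Matrix.cons_val_one, Matrix.cons_val_zero, add_sub_cancel_left] at this

lemma no_single (h : IsSkeleton S e) {w : X} (hw : w ∈ S \ {0, e}) {c : ℝ} (hc : 0 < c)
    (heq : e = c • w) : False := by
  set ε : ℝ := min c 1 / 2 with hεdef
  have hε : 0 < ε := by positivity
  have hεc : ε < c := lt_of_lt_of_le (half_lt_self (lt_min hc one_pos)) (min_le_left _ _)
  have hε1 : ε ≤ 1 / 2 := by
    have := min_le_right c 1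
    simp only [hεdef]
    linarith
  have heq2 : e = (c - ε) • w + ε • w := by
    rw [← add_smul, sub_add_cancel]; exact heq
  have := (two_rep h hw hw (by linarith) hε heq2).2
  linarith

lemma no_single' (h : IsSkeleton S e) {w : X} (hw : w ∈ S \ {0, e}) {m c : ℝ} (hm : 0 < m)
    (hc : 0 < c) (heq : m • e = c • w) : False := by
  apply no_single h hw (c := c / m) (by positivity)
  have := congrArg (fun x => (m⁻¹ : ℝ) • x) heq
  simpa [smul_smul, inv_mul_cancel₀ hm.ne', div_eq_inv_mul] using this

lemma two_rep' (h : IsSkeleton S e) {u₁ u₂ : X} (h1 : u₁ ∈ S \ {0, e}) (h2 : u₂ ∈ S \ {0, e})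
    {m p q : ℝ} (hm : 0 < m) (hp : 0 < p) (hq : 0 < q) (heq : m • e = p • u₁ + q • u₂) :
    m ≤ p ∧ m ≤ q := by
  have heq' : e = (m⁻¹ * p) • u₁ + (m⁻¹ * q) • u₂ := by
    have := congrArg (fun x => (m⁻¹ : ℝ) • x) heq
    simpa [smul_smul, smul_add, inv_smul_smul₀ hm.ne'] using this
  obtain ⟨k1, k2⟩ := two_rep h h1 h2 (by positivity) (by positivity) heq'
  rw [inv_mul_eq_div] at k1 k2
  exact ⟨(one_le_div hm).mp k1, (one_le_div hm).mp k2⟩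

lemma comb2 (h : IsSkeleton S e) {u v : X} (hu : u ∈ S) (hv : v ∈ S) {c d : ℝ}
    (hc : 0 ≤ c) (hd : 0 ≤ d) :
    ∃ w ∈ S \ {0, e}, ∃ a b : ℝ, 0 ≤ a ∧ 0 ≤ b ∧ c • u + d • v = a • e + b • w := by
  rcases eq_or_lt_of_le (add_nonneg hc hd) with hs | hs
  · obtain ⟨w, hw⟩ := S0_nonempty h
    have hc0 : c = 0 := by linarith
    have hd0 : d = 0 := by linarith
    exact ⟨w, hw, 0, 0, le_rfl, le_rfl, by simp [hc0, hd0]⟩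
  · set s : ℝ := c + d with hsdef
    have hs' : (0:ℝ) < s := by simpa using hs
    obtain ⟨w, hw, a, b, ha, hb, hcomb⟩ := h.comb u hu v hv (c / s) (by positivity)
      (div_le_one_of_le₀ (by linarith) hs'.le)
    refine ⟨w, hw, s * a, s * b, by positivity, by positivity, ?_⟩
    have := congrArg (fun x => s • x) hcomb
    simp only [smul_add, smul_smul] at this
    have e1 : s * (c / s) = c := by field_simp
    have e2 : s * (1 - c / s) = d := by field_simp; ring
    rwa [e1, e2] at this

lemma cone_rep (h : IsSkeleton S e) {x : X} (hx : x ∈ coneOf S) :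
    ∃ w ∈ S \ {0, e}, ∃ a b : ℝ, 0 ≤ a ∧ 0 ≤ b ∧ x = a • e + b • w := by
  obtain ⟨n, u, a, hu, ha, rfl⟩ := hx
  induction n with
  | zero =>
    obtain ⟨w, hw⟩ := S0_nonempty h
    exact ⟨w, hw, 0, 0, le_rfl, le_rfl, by simp⟩
  | succ n ih =>
    obtain ⟨w, hw, c, b, hc, hb, hsum⟩ := ih (fun i => u i.castSucc) (fun i => a i.castSucc)
      (fun i => hu i.castSucc) (fun i => ha i.castSucc)
    obtain ⟨w', hw', c', b', hc', hb', hcomb⟩ := comb2 h hw.1 (hu (Fin.last n)) hb (ha (Fin.last n))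
    refine ⟨w', hw', c + c', b', by positivity, hb', ?_⟩
    rw [Fin.sum_univ_castSucc, hsum, add_assoc, hcomb, ← add_assoc, ← add_smul]

lemma rel_zero_aux (h : IsSkeleton S e) {w w' : X} (hw : w ∈ S \ {0, e}) (hw' : w' ∈ S \ {0, e})
    {s b d : ℝ} (hs : 0 ≤ s) (hb : 0 ≤ b) (hd : 0 < d)
    (rel : s • e + b • w + d • w' = 0) : False := by
  have hm : (0:ℝ) < d + s + b := by linarith
  have key : (d + s + b) • e = d • (e - w') + b • (e - w) := by
    linear_combination (norm := module) rel
  rcases eq_or_lt_of_le hb with hb0 | hb0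
  · have key' : (d + s + b) • e = d • (e - w') := by
      rw [key, ← hb0]; simp
    exact no_single' h (compl_S0 h hw') hm hd key'
  · have := (two_rep' h (compl_S0 h hw') (compl_S0 h hw) hm hd hb0 key).1
    linarith

lemma rel_zero (h : IsSkeleton S e) {w w' : X} (hw : w ∈ S \ {0, e}) (hw' : w' ∈ S \ {0, e})
    {s b d : ℝ} (hs : 0 ≤ s) (hb : 0 ≤ b) (hd : 0 ≤ d)
    (rel : s • e + b • w + d • w' = 0) : s = 0 ∧ b = 0 ∧ d = 0 := by
  rcases eq_or_lt_of_le hd with hd0 | hd0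
  · rcases eq_or_lt_of_le hb with hb0 | hb0
    · refine ⟨?_, hb0.symm, hd0.symm⟩
      have : s • e = 0 := by
        rw [← hb0, ← hd0] at rel; simpa using rel
      rcases smul_eq_zero.mp this with h1 | h1
      · exact h1
      · exact absurd h1 h.head_ne
    · exfalso
      have rel' : s • e + d • w' + b • w = 0 := by linear_combination (norm := module) rel
      exact rel_zero_aux h hw' hw hs hd hb0 rel'
  · exact absurd (rel_zero_aux h hw hw' hs hb hd0 rel) (by simp)

lemma no_pos_e (h : IsSkeleton S e) {w₁ w₂ : X} (h1 : w₁ ∈ S \ {0, e}) (h2 : w₂ ∈ S \ {0, e})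
    {t b₁ b₂ : ℝ} (ht : 0 < t) (hb₁ : 0 ≤ b₁) (hb₂ : 0 ≤ b₂)
    (rel : b₂ • w₂ + t • e = b₁ • w₁) : False := by
  rcases eq_or_lt_of_le hb₁ with hb₁0 | hb₁0
  · have rel' : t • e + b₂ • w₂ + (0:ℝ) • w₂ = 0 := by
      rw [← hb₁0] at rel
      linear_combination (norm := module) rel
    have := (rel_zero h h2 h2 ht.le hb₂ le_rfl rel').1
    linarith
  · rcases eq_or_lt_of_le hb₂ with hb₂0 | hb₂0
    · have rel' : t • e = b₁ • w₁ := by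
        rw [← hb₂0] at rel; simpa using rel
      exact no_single' h h1 ht hb₁0 rel'
    · have key : (b₂ + t) • e = b₂ • (e - w₂) + b₁ • w₁ := by
        linear_combination (norm := module) rel
      have := (two_rep' h (compl_S0 h h2) h1 (by linarith) hb₂0 hb₁0 key).1
      linarith

lemma r_lower (h : IsSkeleton S e) {w : X} (hw : w ∈ S \ {0, e}) {a b r : ℝ}
    (ha : 0 ≤ a) (hb : 0 ≤ b) (hmem : r • e - (a • e + b • w) ∈ coneOf S) : a + b ≤ r := by
  obtain ⟨w'', hw'', c, d, hc, hd, hrep⟩ := cone_rep h hmem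
  have rel : (r - a - c) • e = b • w + d • w'' := by
    linear_combination (norm := module) hrep
  set t : ℝ := r - a - c with htdef
  rcases lt_trichotomy t 0 with ht | ht | ht
  · exfalso
    have rel' : (-t) • e + b • w + d • w'' = 0 := by
      linear_combination (norm := module) -rel
    have := (rel_zero h hw hw'' (by linarith) hb hd rel').1
    linarith
  · have rel0 : b • w + d • w'' = 0 := by rw [← rel, ht, zero_smul]
    have rel' : (0:ℝ) • e + b • w + d • w'' = 0 := by rw [zero_smul, zero_add]; exact rel0
    have hb0 := (rel_zero h hw hw'' le_rfl hb hd rel').2.1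
    linarith
  · rcases eq_or_lt_of_le hb with hb0 | hb0
    · rcases eq_or_lt_of_le hd with hd0 | hd0
      · exfalso
        have : t • e = 0 := by rw [rel, ← hb0, ← hd0]; simp
        rcases smul_eq_zero.mp this with h1 | h1
        · linarith
        · exact h.head_ne h1
      · exfalso
        have rel'' : t • e = d • w'' := by rw [rel, ← hb0]; simp
        exact no_single' h hw'' ht hd0 rel''
    · rcases eq_or_lt_of_le hd with hd0 | hd0
      · exfalso
        have rel'' : t • e = b • w := by rw [rel, ← hd0]; simp
        exact no_single' h hw ht hb0 rel''
      · rcases le_or_gt (d + b - t) 0 with hm | hm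
        · exfalso
          have rel2 : (-(d + b - t)) • e + d • (e - w'') + b • (e - w) = 0 := by
            linear_combination (norm := module) rel
          have := (rel_zero h (compl_S0 h hw'') (compl_S0 h hw) (by linarith) hd0.le hb0.le rel2).2.1
          linarith
        · have key : (d + b - t) • e = d • (e - w'') + b • (e - w) := by
            linear_combination (norm := module) -rel
          have := (two_rep' h (compl_S0 h hw'') (compl_S0 h hw) hm hd0 hb0 key).1
          linarith

lemma nval (h : IsSkeleton S e) {w : X} (hw : w ∈ S \ {0, e}) {a b : ℝ} (ha : 0 ≤ a) (hb : 0 ≤ b) :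
    sInf {r : ℝ | 0 < r ∧ r • e - (a • e + b • w) ∈ coneOf S ∧
      r • e + (a • e + b • w) ∈ coneOf S} = a + b := by
  rcases eq_or_lt_of_le (add_nonneg ha hb) with h0 | h0
  · have ha0 : a = 0 := by linarith
    have hb0 : b = 0 := by linarith
    have hset : {r : ℝ | 0 < r ∧ r • e - (a • e + b • w) ∈ coneOf S ∧
        r • e + (a • e + b • w) ∈ coneOf S} = Set.Ioi 0 := by
      ext r
      simp only [ha0, hb0, zero_smul, add_zero, sub_zero, Set.mem_setOf_eq, Set.mem_Ioi]
      exact ⟨fun hr => hr.1, fun hr =>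
        ⟨hr, coneOf_smul hr.le (mem_coneOf h.head_mem), coneOf_smul hr.le (mem_coneOf h.head_mem)⟩⟩
    rw [hset, csInf_Ioi]
    linarith
  · have hmem : (a + b) ∈ {r : ℝ | 0 < r ∧ r • e - (a • e + b • w) ∈ coneOf S ∧
        r • e + (a • e + b • w) ∈ coneOf S} := by
      refine ⟨h0, ?_, ?_⟩
      · rw [show (a + b) • e - (a • e + b • w) = b • (e - w) by module]
        exact coneOf_smul hb (mem_coneOf (h.compl_mem w hw.1))
      · rw [show (a + b) • e + (a • e + b • w) = (2 * a + b) • e + b • w by module]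
        exact coneOf_add (coneOf_smul (by linarith) (mem_coneOf h.head_mem))
          (coneOf_smul hb (mem_coneOf hw.1))
    apply le_antisymm
    · exact csInf_le ⟨0, fun r hr => le_of_lt hr.1⟩ hmem
    · exact le_csInf ⟨a + b, hmem⟩ (fun r hr => r_lower h hw ha hb hr.2.1)

lemma arch_X (h : IsSkeleton S e) {x : X} (hx : ∀ ε : ℝ, 0 < ε → ε • e + x ∈ coneOf S) :
    x ∈ coneOf S := by
  obtain ⟨w₁, hw₁, a₁, b₁, ha₁, hb₁, h₁⟩ := cone_rep h (hx 1 one_pos)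
  rcases le_or_gt 1 a₁ with hge | hlt
  · rw [show x = (a₁ - 1) • e + b₁ • w₁ by linear_combination (norm := module) h₁]
    exact coneOf_add (coneOf_smul (by linarith) (mem_coneOf h.head_mem))
      (coneOf_smul hb₁ (mem_coneOf hw₁.1))
  · set δ₁ : ℝ := 1 - a₁ with hδ₁def
    have hδ₁ : 0 < δ₁ := by simp only [hδ₁def]; linarith
    have e₁ : x + δ₁ • e = b₁ • w₁ := by
      simp only [hδ₁def]
      linear_combination (norm := module) h₁
    obtain ⟨w₂, hw₂, a₂, b₂, ha₂, hb₂, h₂⟩ := cone_rep h (hx (δ₁ / 2) (by positivity))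
    rcases le_or_gt (δ₁ / 2) a₂ with hge2 | hlt2
    · rw [show x = (a₂ - δ₁ / 2) • e + b₂ • w₂ by linear_combination (norm := module) h₂]
      exact coneOf_add (coneOf_smul (by linarith) (mem_coneOf h.head_mem))
        (coneOf_smul hb₂ (mem_coneOf hw₂.1))
    · set δ₂ : ℝ := δ₁ / 2 - a₂ with hδ₂def
      have hδ₂ : 0 < δ₂ := by simp only [hδ₂def]; linarith
      have hδ₂lt : δ₂ < δ₁ := by simp only [hδ₂def]; linarith
      have e₂ : x + δ₂ • e = b₂ • w₂ := by
        simp only [hδ₂def]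
        linear_combination (norm := module) h₂
      have rel : b₂ • w₂ + (δ₁ - δ₂) • e = b₁ • w₁ := by
        linear_combination (norm := module) e₁ - e₂
      exact absurd (no_pos_e h hw₁ hw₂ (by linarith) hb₁ hb₂ rel) (by simp)

lemma proper_X (h : IsSkeleton S e) {x : X} (hx : x ∈ coneOf S) (hx' : -x ∈ coneOf S) :
    x = 0 := by
  obtain ⟨w, hw, a, b, ha, hb, h₁⟩ := cone_rep h hx
  obtain ⟨w', hw', c, d, hc, hd, h₂⟩ := cone_rep h hx'
  have rel : (a + c) • e + b • w + d • w' = 0 := by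
    linear_combination (norm := module) -h₁ - h₂
  obtain ⟨hs, hb0, hd0⟩ := rel_zero h hw hw' (by positivity) hb hd rel
  have ha0 : a = 0 := by linarith
  rw [h₁, ha0, hb0]
  simp

lemma unit_X (h : IsSkeleton S e) {x : X} (hx : x ∈ Submodule.span ℝ S) :
    ∃ a : ℝ, 0 < a ∧ a • e - x ∈ coneOf S ∧ a • e + x ∈ coneOf S := by
  induction hx using Submodule.span_induction with
  | mem x hxS =>
    refine ⟨2, two_pos, ?_, ?_⟩
    · rw [show (2:ℝ) • e - x = e + (e - x) by module]
      exact coneOf_add (mem_coneOf h.head_mem) (mem_coneOf (h.compl_mem x hxS))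
    · rw [show (2:ℝ) • e + x = e + (e + x) by module]
      exact coneOf_add (mem_coneOf h.head_mem)
        (coneOf_add (mem_coneOf h.head_mem) (mem_coneOf hxS))
  | zero =>
    exact ⟨1, one_pos, by simpa using mem_coneOf h.head_mem, by simpa using mem_coneOf h.head_mem⟩
  | add x y hxm hym ihx ihy =>
    obtain ⟨a, ha, ha1, ha2⟩ := ihx
    obtain ⟨c, hc, hc1, hc2⟩ := ihy
    refine ⟨a + c, by linarith, ?_, ?_⟩
    · rw [show (a + c) • e - (x + y) = (a • e - x) + (c • e - y) by module]
      exact coneOf_add ha1 hc1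
    · rw [show (a + c) • e + (x + y) = (a • e + x) + (c • e + y) by module]
      exact coneOf_add ha2 hc2
  | smul r x hxm ih =>
    obtain ⟨a, ha, ha1, ha2⟩ := ih
    rcases le_or_gt 0 r with hr | hr
    · refine ⟨r * a + 1, by positivity, ?_, ?_⟩
      · rw [show (r * a + 1) • e - r • x = r • (a • e - x) + e by module]
        exact coneOf_add (coneOf_smul hr ha1) (mem_coneOf h.head_mem)
      · rw [show (r * a + 1) • e + r • x = r • (a • e + x) + e by module]
        exact coneOf_add (coneOf_smul hr ha2) (mem_coneOf h.head_mem)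
    · refine ⟨(-r) * a + 1, by nlinarith, ?_, ?_⟩
      · rw [show ((-r) * a + 1) • e - r • x = (-r) • (a • e + x) + e by module]
        exact coneOf_add (coneOf_smul (by linarith) ha2) (mem_coneOf h.head_mem)
      · rw [show ((-r) * a + 1) • e + r • x = (-r) • (a • e - x) + e by module]
        exact coneOf_add (coneOf_smul (by linarith) ha1) (mem_coneOf h.head_mem)

end Aux2

section Final
variable {X : Type*} [AddCommGroup X] [Module ℝ X] {S : Set X} {e : X}

lemma ouNorm_coe (he : e ∈ Submodule.span ℝ S) (v : ↥(Submodule.span ℝ S)) :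
    ouNorm {w : Submodule.span ℝ S | (w : X) ∈ coneOf S} ⟨e, he⟩ v
      = sInf {r : ℝ | 0 < r ∧ r • e - (v : X) ∈ coneOf S ∧ r • e + (v : X) ∈ coneOf S} := by
  unfold ouNorm
  congr 1

lemma norm_eq (h : IsSkeleton S e) (he : e ∈ Submodule.span ℝ S)
    (v : ↥(Submodule.span ℝ S)) {w : X} {a b : ℝ} (hw : w ∈ S \ {0, e})
    (ha : 0 ≤ a) (hb : 0 ≤ b) (hx : (v : X) = a • e + b • w) :
    ouNorm {w : Submodule.span ℝ S | (w : X) ∈ coneOf S} ⟨e, he⟩ v = a + b := by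
  rw [ouNorm_coe he, hx]
  exact nval h hw ha hb

end Final

theorem skeleton_gives_order_unit_space
    {X : Type*} [AddCommGroup X] [Module ℝ X] {S : Set X} {e : X}
    (h : IsSkeleton S e) (he : e ∈ Submodule.span ℝ S) :
    IsOrderUnitSpace {v : Submodule.span ℝ S | (v : X) ∈ coneOf S} ⟨e, he⟩ ∧
    S \ {0, e} = (fun v : Submodule.span ℝ S => (v : X)) ''
      {v : Submodule.span ℝ S | (v : X) ∈ coneOf S ∧
        ouNorm {w : Submodule.span ℝ S | (w : X) ∈ coneOf S} ⟨e, he⟩ v = 1 ∧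
        ouNorm {w : Submodule.span ℝ S | (w : X) ∈ coneOf S} ⟨e, he⟩ (⟨e, he⟩ - v) = 1} := by
  constructor
  · constructor
    · simp only [Set.mem_setOf_eq, ZeroMemClass.coe_zero]
      exact coneOf_zero
    · intro u hu v hv
      simp only [Set.mem_setOf_eq, Submodule.coe_add]
      exact coneOf_add hu hv
    · intro r hr v hv
      simp only [Set.mem_setOf_eq, SetLike.val_smul]
      exact coneOf_smul hr hv
    · intro v hv hv'
      have : (v : X) = 0 := proper_X h hv (by simpa using hv')
      exact Subtype.ext this
    · intro v hv
      exact arch_X h (fun ε hε => by simpa using hv ε hε)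
    · intro v
      obtain ⟨a, ha, h1, h2⟩ := unit_X h v.2
      refine ⟨a, ha, ?_, ?_⟩
      · show ((a • (⟨e, he⟩ : ↥(Submodule.span ℝ S)) - v : ↥(Submodule.span ℝ S)) : X) ∈ coneOf S
        simpa using h1
      · show ((a • (⟨e, he⟩ : ↥(Submodule.span ℝ S)) + v : ↥(Submodule.span ℝ S)) : X) ∈ coneOf S
        simpa using h2
  · ext x
    constructor
    · intro hx
      refine ⟨⟨x, Submodule.subset_span hx.1⟩, ⟨mem_coneOf hx.1, ?_, ?_⟩, rfl⟩
      · have := norm_eq h he ⟨x, Submodule.subset_span hx.1⟩ hx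
          le_rfl zero_le_one (by simp)
        simpa using this
      · have hco : ((⟨e, he⟩ - ⟨x, Submodule.subset_span hx.1⟩ : ↥(Submodule.span ℝ S)) : X)
            = (0:ℝ) • e + (1:ℝ) • (e - x) := by simp
        have := norm_eq h he _ (compl_S0 h hx) le_rfl zero_le_one hco
        simpa using this
    · rintro ⟨v, ⟨hc, hn1, hn2⟩, rfl⟩
      obtain ⟨w, hw, a, b, ha, hb, hrep⟩ := cone_rep h hc
      have hab : a + b = 1 := by
        rw [norm_eq h he v hw ha hb hrep] at hn1
        exact hn1
      have hco : ((⟨e, he⟩ - v : ↥(Submodule.span ℝ S)) : X) = (0:ℝ) • e + b • (e - w) := by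
        have : ((⟨e, he⟩ - v : ↥(Submodule.span ℝ S)) : X) = e - (v : X) := by simp
        rw [this, hrep]
        have haeq : a = 1 - b := by linarith
        rw [haeq]
        module
      have hb1 : b = 1 := by
        have := norm_eq h he _ (compl_S0 h hw) le_rfl hb hco
        rw [this] at hn2
        linarith
      have ha0 : a = 0 := by linarith
      have hvw : (v : X) = w := by rw [hrep, ha0, hb1]; simp
      show (v : X) ∈ S \ {0, e}
      rw [hvw]
      exact hw
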